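/- arXiv:2007.03986 — 2 statements merged into one kernel-verified Lean document; each statement's English description precedes it below -/
import Mathlib

section
/- Let A and B be adjacent integer points in the grid G = {0,…,m−1} × {0,…,n−1} and f the function defined by the oriented segment AB. Then A and B are essential points of f with respect to the class of threshold functions on G: the function obtained from f by flipping the value at A (respectively at B) is still a threshold function. -/
/-- Cast an integer point to the real plane. -/
def toR (p : ℤ × ℤ) : ℝ × ℝ := ((p.1 : ℝ), (p.2 : ℝ))

/-- Signed area determinant Δ(P,Q,R). -/
def Det (P Q R : ℤ × ℤ) : ℤ :=
  (Q.1 - P.1) * (R.2 - P.2) - (Q.2 - P.2) * (R.1 - P.1)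

/-- Two integer points are adjacent: distinct, and the segment between them
contains no integer point other than the endpoints. -/
def Adjacent (A B : ℤ × ℤ) : Prop :=
  A ≠ B ∧ ∀ C : ℤ × ℤ, toR C ∈ segment ℝ (toR A) (toR B) → C = A ∨ C = B

/-- The {0,1}-valued (Bool-valued) function defined by the oriented prime
segment AB: on the line through A and B it is true iff the point is strictly
closer to A than to B; off the line it is true iff triangle A B X is
counterclockwise. -/
def fseg (A B X : ℤ × ℤ) : Bool :=
  if Det A B X = 0 then
    decide ((X.1 - A.1) ^ 2 + (X.2 - A.2) ^ 2 < (X.1 - B.1) ^ 2 + (X.2 - B.2) ^ 2)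
  else
    decide (0 < Det A B X)

/-- The grid {0,…,m−1} × {0,…,n−1} as a set of integer points. -/
def Grid (m n : ℕ) : Set (ℤ × ℤ) :=
  {p | 0 ≤ p.1 ∧ p.1 < (m : ℤ) ∧ 0 ≤ p.2 ∧ p.2 < (n : ℤ)}

/-- A pair of oriented prime segments (A,B), (C,D) is proper. -/
def ProperPair (A B C D : ℤ × ℤ) : Prop :=
  Adjacent A B ∧ Adjacent C D ∧
    fseg C D A = true ∧ fseg C D B = true ∧ fseg A B C = true ∧ fseg A B D = true

/-- f is a threshold function on the grid. -/
def IsThreshold (m n : ℕ) (f : ℤ × ℤ → Bool) : Prop :=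
  ∃ a0 a1 a2 : ℝ, ∀ p ∈ Grid m n,
    (f p = true ↔ a1 * (p.1 : ℝ) + a2 * (p.2 : ℝ) ≥ a0)

/-- f is a 2-threshold function on the grid: a conjunction of two threshold
functions. -/
def Is2Threshold (m n : ℕ) (f : ℤ × ℤ → Bool) : Prop :=
  ∃ g h : ℤ × ℤ → Bool, IsThreshold m n g ∧ IsThreshold m n h ∧
    ∀ p ∈ Grid m n, f p = (g p && h p)

lemma adj_coprime (A B : ℤ × ℤ) (h : Adjacent A B) :
    Int.gcd (B.1 - A.1) (B.2 - A.2) = 1 := by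
  set d1 := B.1 - A.1 with hd1
  set d2 := B.2 - A.2 with hd2
  have hd : ¬(d1 = 0 ∧ d2 = 0) := by
    rintro ⟨h1, h2⟩
    exact h.1 (Prod.ext (by omega) (by omega))
  set g : ℕ := Int.gcd d1 d2 with hg
  have hg0 : g ≠ 0 := by
    simp only [hg, Ne, Int.gcd_eq_zero_iff]
    tauto
  by_contra hne
  have hg2 : 2 ≤ g := by omega
  obtain ⟨e1, he1⟩ : (g : ℤ) ∣ d1 := Int.gcd_dvd_left d1 d2
  obtain ⟨e2, he2⟩ : (g : ℤ) ∣ d2 := Int.gcd_dvd_right d1 d2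
  have hgR : (2 : ℝ) ≤ (g : ℝ) := by exact_mod_cast hg2
  have hgR0 : (g : ℝ) ≠ 0 := by positivity
  have hgRpos : (0 : ℝ) < (g : ℝ) := by linarith
  have hseg : toR (A.1 + e1, A.2 + e2) ∈ segment ℝ (toR A) (toR B) := by
    refine ⟨1 - 1/(g:ℝ), 1/(g:ℝ), ?_, by positivity, by ring, ?_⟩
    · rw [sub_nonneg, div_le_one hgRpos]; linarith
    · have c1 : ((d1 : ℝ)) = (g : ℝ) * (e1 : ℝ) := by exact_mod_cast he1
      have c2 : ((d2 : ℝ)) = (g : ℝ) * (e2 : ℝ) := by exact_mod_cast he2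
      have b1 : ((B.1 : ℝ)) = (A.1 : ℝ) + (d1 : ℝ) := by rw [hd1]; push_cast; ring
      have b2 : ((B.2 : ℝ)) = (A.2 : ℝ) + (d2 : ℝ) := by rw [hd2]; push_cast; ring
      apply Prod.ext
      · simp only [toR, Prod.smul_fst, Prod.fst_add, smul_eq_mul]
        rw [b1, c1]; push_cast; field_simp; ring
      · simp only [toR, Prod.smul_snd, Prod.snd_add, smul_eq_mul]
        rw [b2, c2]; push_cast; field_simp; ring
  rcases h.2 _ hseg with hc | hc
  · rw [Prod.ext_iff] at hc
    obtain ⟨hc1, hc2⟩ := hc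
    simp only at hc1 hc2
    have he10 : e1 = 0 := by omega
    have he20 : e2 = 0 := by omega
    exact hd ⟨by rw [he1, he10, mul_zero], by rw [he2, he20, mul_zero]⟩
  · rw [Prod.ext_iff] at hc
    obtain ⟨hc1, hc2⟩ := hc
    simp only at hc1 hc2
    have hd1e : d1 = e1 := by omega
    have hd2e : d2 = e2 := by omega
    have e1g : e1 = (g:ℤ) * e1 := by linarith [he1, hd1e]
    have e2g : e2 = (g:ℤ) * e2 := by linarith [he2, hd2e]
    have he10 : e1 = 0 := by
      have hz : e1 * ((g:ℤ) - 1) = 0 := by linear_combination (-1 : ℤ) * e1g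
      rcases mul_eq_zero.1 hz with hh | hh
      · exact hh
      · exfalso; omega
    have he20 : e2 = 0 := by
      have hz : e2 * ((g:ℤ) - 1) = 0 := by linear_combination (-1 : ℤ) * e2g
      rcases mul_eq_zero.1 hz with hh | hh
      · exact hh
      · exfalso; omega
    exact hd ⟨by rw [he1, he10, mul_zero], by rw [he2, he20, mul_zero]⟩

set_option maxHeartbeats 2000000 in
lemma flip_thresh (m n : ℕ) (A B : ℤ × ℤ) (hA : A ∈ Grid m n) (hB : B ∈ Grid m n)
    (hadj : Adjacent A B) (Q : ℤ × ℤ) (k : ℤ)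
    (hQ : (Q = A ∧ k = -1) ∨ (Q = B ∧ k = 1)) :
    IsThreshold m n (fun X => if X = Q then !(fseg A B X) else fseg A B X) := by
  have hg := adj_coprime A B hadj
  set d1 := B.1 - A.1 with hd1
  set d2 := B.2 - A.2 with hd2
  set N : ℤ := d1 ^ 2 + d2 ^ 2 with hN
  have hd : ¬(d1 = 0 ∧ d2 = 0) := by
    rintro ⟨h1, h2⟩
    exact hadj.1 (Prod.ext (by omega) (by omega))
  have hN1 : 1 ≤ N := by
    rcases (not_and_or.1 hd) with h | h
    · nlinarith [sq_nonneg d2, Int.one_le_abs h, sq_abs d1, abs_nonneg d1]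
    · nlinarith [sq_nonneg d1, Int.one_le_abs h, sq_abs d2, abs_nonneg d2]
  have hk1 : k = -1 ∨ k = 1 := by rcases hQ with ⟨_, h⟩ | ⟨_, h⟩ <;> [left; right] <;> exact h
  set C : ℤ := |d1| * m + |d2| * n + N + 1 with hC
  have habsm : (0:ℤ) ≤ |d1| * m := mul_nonneg (abs_nonneg _) (by positivity)
  have habsn : (0:ℤ) ≤ |d2| * n := mul_nonneg (abs_nonneg _) (by positivity)
  have hC1 : 1 ≤ C := by omega
  have hNC : N ≤ C := by omega
  clear_value d1 d2 N C
  set ε : ℝ := 1 / (8 * (C : ℝ)) with hε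
  clear_value ε
  have hCR : (1 : ℝ) ≤ (C : ℝ) := by exact_mod_cast hC1
  have hεpos : 0 < ε := by rw [hε]; positivity
  have hεC : ε * (C : ℝ) = 1 / 8 := by rw [hε]; field_simp
  have hNR1 : (1 : ℝ) ≤ (N : ℝ) := by exact_mod_cast hN1
  have hNCR : (N : ℝ) ≤ (C : ℝ) := by exact_mod_cast hNC
  have hεN : ε * (N : ℝ) ≤ 1 / 8 := by
    have := mul_le_mul_of_nonneg_left hNCR hεpos.le
    linarith
  have hεN0 : 0 < ε * (N : ℝ) := mul_pos hεpos (by linarith)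
  have hεN1 : ε ≤ ε * (N : ℝ) := by
    have := mul_le_mul_of_nonneg_left hNR1 hεpos.le
    linarith
  have hε8 : ε ≤ 1 / 8 := by
    have := mul_le_mul_of_nonneg_left hCR hεpos.le
    linarith
  refine ⟨(-ε * (k:ℝ) * (N:ℝ) - ε/2) + ((-(d2:ℝ)) - ε * (d1:ℝ)) * (A.1:ℝ)
      + ((d1:ℝ) - ε * (d2:ℝ)) * (A.2:ℝ),
    (-(d2:ℝ)) - ε * (d1:ℝ), (d1:ℝ) - ε * (d2:ℝ), ?_⟩
  intro p hp
  obtain ⟨hp1, hp2, hp3, hp4⟩ := hp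
  obtain ⟨hA1, hA2, hA3, hA4⟩ := hA
  obtain ⟨hB1, hB2, hB3, hB4⟩ := hB
  set u1 : ℤ := p.1 - A.1 with hu1
  set u2 : ℤ := p.2 - A.2 with hu2
  set L : ℤ := d1 * u2 - d2 * u1 with hL
  set M : ℤ := d1 * u1 + d2 * u2 with hM
  clear_value u1 u2 L M
  have hu1b : |u1| ≤ (m : ℤ) := by rw [abs_le]; omega
  have hu2b : |u2| ≤ (n : ℤ) := by rw [abs_le]; omega
  have hMb : |M| ≤ C := by
    rw [hM]
    calc |d1 * u1 + d2 * u2| ≤ |d1 * u1| + |d2 * u2| := abs_add_le _ _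
      _ = |d1| * |u1| + |d2| * |u2| := by rw [abs_mul, abs_mul]
      _ ≤ |d1| * m + |d2| * n :=
          add_le_add (mul_le_mul_of_nonneg_left hu1b (abs_nonneg _))
            (mul_le_mul_of_nonneg_left hu2b (abs_nonneg _))
      _ ≤ C := by linarith
  have hMR : |(M : ℝ)| ≤ (C : ℝ) := by
    rw [← Int.cast_abs]
    exact_mod_cast hMb
  have hεM : -(1/8 : ℝ) ≤ ε * (M:ℝ) ∧ ε * (M:ℝ) ≤ 1/8 := by
    rw [abs_le] at hMR
    constructor
    · have := mul_le_mul_of_nonneg_left hMR.1 hεpos.le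
      have h2 : ε * -(C:ℝ) = -(ε * C) := by ring
      linarith
    · have := mul_le_mul_of_nonneg_left hMR.2 hεpos.le
      linarith
  have key : ((-(d2:ℝ)) - ε * (d1:ℝ)) * (p.1:ℝ) + ((d1:ℝ) - ε * (d2:ℝ)) * (p.2:ℝ)
      - ((-ε * (k:ℝ) * (N:ℝ) - ε/2) + ((-(d2:ℝ)) - ε * (d1:ℝ)) * (A.1:ℝ)
        + ((d1:ℝ) - ε * (d2:ℝ)) * (A.2:ℝ))
      = ((L:ℝ) - ε * (M:ℝ)) - (-ε * (k:ℝ) * (N:ℝ) - ε/2) := by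
    rw [hL, hM, hu1, hu2, hN, hd1, hd2]; push_cast; ring
  have hRHS : (((-(d2:ℝ)) - ε * (d1:ℝ)) * (p.1:ℝ) + ((d1:ℝ) - ε * (d2:ℝ)) * (p.2:ℝ)
      ≥ (-ε * (k:ℝ) * (N:ℝ) - ε/2) + ((-(d2:ℝ)) - ε * (d1:ℝ)) * (A.1:ℝ)
        + ((d1:ℝ) - ε * (d2:ℝ)) * (A.2:ℝ))
      ↔ ((L:ℝ) - ε * (M:ℝ) ≥ -ε * (k:ℝ) * (N:ℝ) - ε/2) := by
    constructor <;> intro h <;> linarith [key]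
  refine Iff.trans ?_ hRHS.symm
  show (if p = Q then !(fseg A B p) else fseg A B p) = true
      ↔ (L:ℝ) - ε * (M:ℝ) ≥ -ε * (k:ℝ) * (N:ℝ) - ε/2
  have hDet : Det A B p = L := by rw [hL, hu1, hu2, hd1, hd2]; simp only [Det]
  have hLA : p = A → L = 0 := by intro h; rw [hL, hu1, hu2, h]; ring
  have hLB : p = B → L = 0 := by intro h; rw [hL, hu1, hu2, hd1, hd2, h]; ring
  rcases lt_trichotomy L 0 with hL0 | hL0 | hL0
  · -- L < 0 : both sides false
    have hlne : L ≠ 0 := by omega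
    have hpQ : p ≠ Q := by
      intro h
      rcases hQ with ⟨hqa, _⟩ | ⟨hqb, _⟩
      · exact hlne (hLA (h.trans hqa))
      · exact hlne (hLB (h.trans hqb))
    rw [if_neg hpQ]
    apply iff_of_false
    · have hfs : fseg A B p = decide (0 < L) := by simp [fseg, hDet, hlne]
      rw [hfs]; simp; omega
    · intro hcon
      have hLR : (L:ℝ) ≤ -1 := by exact_mod_cast (by omega : L ≤ -1)
      rcases hk1 with h | h <;> rw [h] at hcon <;> push_cast at hcon <;>
        linarith [hεM.1, hεM.2, hεN, hεN0, hε8]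
  · -- L = 0 : the on-line case
    have hLraw : d1 * u2 - d2 * u1 = 0 := by rw [← hL]; exact hL0
    have e1 : d1 * M = N * u1 := by linear_combination d1 * hM - u1 * hN + d2 * hLraw
    have e2 : d2 * M = N * u2 := by linear_combination d2 * hM - u2 * hN - d1 * hLraw
    have hco : IsCoprime d1 d2 := Int.isCoprime_iff_gcd_eq_one.2 hg
    obtain ⟨x, y, hxy⟩ := hco
    set t : ℤ := x * u1 + y * u2 with ht
    clear_value t
    have hMt : M = t * N := by linear_combination x * e1 + y * e2 - M * hxy - N * ht
    have hu1t : u1 = t * d1 := by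
      have hz : N * (t * d1 - u1) = 0 := by linear_combination e1 - d1 * hMt
      rcases mul_eq_zero.1 hz with h | h
      · omega
      · linarith
    have hu2t : u2 = t * d2 := by
      have hz : N * (t * d2 - u2) = 0 := by linear_combination e2 - d2 * hMt
      rcases mul_eq_zero.1 hz with h | h
      · omega
      · linarith
    have hiden : (p.1 - B.1)^2 + (p.2 - B.2)^2 - ((p.1 - A.1)^2 + (p.2 - A.2)^2)
        = N - 2*M := by
      rw [hN, hM, hu1, hu2, hd1, hd2]; ring
    have hdet0 : Det A B p = 0 := hDet.trans hL0
    have hfseg : fseg A B p = true ↔ 2 * M < N := by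
      simp only [fseg, if_pos hdet0, decide_eq_true_eq]
      constructor <;> intro h <;> linarith [hiden]
    have h2M : 2 * M < N ↔ t ≤ 0 := by
      rw [hMt]
      constructor
      · intro h
        by_contra hc
        push_neg at hc
        have h1t : 1 ≤ t := hc
        have := mul_le_mul_of_nonneg_right h1t (by omega : (0:ℤ) ≤ N)
        linarith
      · intro h
        have := mul_le_mul_of_nonneg_right h (by omega : (0:ℤ) ≤ N)
        linarith
    have hpA : p = A ↔ t = 0 := by
      constructor
      · intro h
        have h1 : u1 = 0 := by rw [hu1, h]; ring
        have h2 : u2 = 0 := by rw [hu2, h]; ring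
        rcases not_and_or.1 hd with hne | hne
        · rcases mul_eq_zero.1 (by omega : t * d1 = 0) with hh | hh
          · exact hh
          · exact absurd hh hne
        · rcases mul_eq_zero.1 (by omega : t * d2 = 0) with hh | hh
          · exact hh
          · exact absurd hh hne
      · intro h
        have h1 : u1 = 0 := by rw [hu1t, h, zero_mul]
        have h2 : u2 = 0 := by rw [hu2t, h, zero_mul]
        exact Prod.ext (by omega) (by omega)
    have hpB : p = B ↔ t = 1 := by
      constructor
      · intro h
        have h1 : u1 = d1 := by rw [hu1, h, hd1]
        have h2 : u2 = d2 := by rw [hu2, h, hd2]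
        rcases not_and_or.1 hd with hne | hne
        · rcases mul_eq_zero.1 (show (t - 1) * d1 = 0 by linarith [hu1t]) with hh | hh
          · omega
          · exact absurd hh hne
        · rcases mul_eq_zero.1 (show (t - 1) * d2 = 0 by linarith [hu2t]) with hh | hh
          · omega
          · exact absurd hh hne
      · intro h
        have h1 : u1 = d1 := by rw [hu1t, h, one_mul]
        have h2 : u2 = d2 := by rw [hu2t, h, one_mul]
        exact Prod.ext (by omega) (by omega)
    have hreal : ((L:ℝ) - ε * (M:ℝ) ≥ -ε * (k:ℝ) * (N:ℝ) - ε/2) ↔ t ≤ k := by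
      have hLr : (L:ℝ) = 0 := by exact_mod_cast hL0
      have hMr : (M:ℝ) = (t:ℝ) * (N:ℝ) := by exact_mod_cast hMt
      rw [hLr, hMr]
      constructor
      · intro h
        by_contra hcon
        push_neg at hcon
        have hck : ((k:ℝ) + 1) ≤ (t:ℝ) := by exact_mod_cast hcon
        have hmul : ε * (((k:ℝ) + 1) * (N:ℝ)) ≤ ε * ((t:ℝ) * (N:ℝ)) :=
          mul_le_mul_of_nonneg_left
            (mul_le_mul_of_nonneg_right hck (by linarith)) hεpos.le
        linarith [hmul, hεN1, hεpos]
      · intro h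
        have htk : (t:ℝ) ≤ (k:ℝ) := by exact_mod_cast h
        have hmul : ε * ((t:ℝ) * (N:ℝ)) ≤ ε * ((k:ℝ) * (N:ℝ)) :=
          mul_le_mul_of_nonneg_left
            (mul_le_mul_of_nonneg_right htk (by linarith)) hεpos.le
        linarith [hmul, hεpos.le]
    refine Iff.trans ?_ hreal.symm
    rcases hQ with ⟨hQA, hk⟩ | ⟨hQB, hk⟩
    · -- Q = A, k = -1
      by_cases hc : p = Q
      · rw [if_pos hc]
        have ht0 : t = 0 := hpA.1 (hc.trans hQA)
        have hfs : fseg A B p = true := hfseg.2 (by rw [hMt, ht0, zero_mul]; omega)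
        rw [hfs]
        exact iff_of_false (by simp) (by omega)
      · rw [if_neg hc]
        have htne : t ≠ 0 := fun h => hc ((hpA.2 h).trans hQA.symm)
        rw [hfseg, h2M]
        omega
    · -- Q = B, k = 1
      by_cases hc : p = Q
      · rw [if_pos hc]
        have ht1 : t = 1 := hpB.1 (hc.trans hQB)
        have hnot : ¬ (2 * M < N) := by rw [hMt, ht1, one_mul]; omega
        have hfs : fseg A B p = false := by
          cases hb : fseg A B p
          · rfl
          · exact absurd (hfseg.1 hb) hnot
        rw [hfs]
        exact iff_of_true (by simp) (by omega)
      · rw [if_neg hc]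
        have htne : t ≠ 1 := fun h => hc ((hpB.2 h).trans hQB.symm)
        rw [hfseg, h2M]
        omega
  · -- L > 0 : both sides true
    have hlne : L ≠ 0 := by omega
    have hpQ : p ≠ Q := by
      intro h
      rcases hQ with ⟨hqa, _⟩ | ⟨hqb, _⟩
      · exact hlne (hLA (h.trans hqa))
      · exact hlne (hLB (h.trans hqb))
    rw [if_neg hpQ]
    apply iff_of_true
    · have hfs : fseg A B p = decide (0 < L) := by simp [fseg, hDet, hlne]
      rw [hfs]; simp; omega
    · have hLR : (1:ℝ) ≤ (L:ℝ) := by exact_mod_cast (by omega : 1 ≤ L)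
      rcases hk1 with h | h <;> rw [h] <;> push_cast <;>
        linarith [hεM.1, hεM.2, hεN, hεN0, hε8]

/-- A and B are essential points of the function defined by the
oriented prime segment AB: flipping the value at A (resp. at B) yields a
threshold function on the grid. -/
theorem stmt6 (m n : ℕ) (A B : ℤ × ℤ)
    (hA : A ∈ Grid m n) (hB : B ∈ Grid m n) (hadj : Adjacent A B) :
    IsThreshold m n (fun X => if X = A then !(fseg A B X) else fseg A B X) ∧
    IsThreshold m n (fun X => if X = B then !(fseg A B X) else fseg A B X) :=
  ⟨flip_thresh m n A B hA hB hadj A (-1) (Or.inl ⟨rfl, rfl⟩),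
   flip_thresh m n A B hA hB hadj B 1 (Or.inr ⟨rfl, rfl⟩)⟩
end

section
/- Let {AB, AD} be a proper pair of oriented prime segments sharing their first endpoint A, defining the function f = f_AB ∧ f_AD on the grid G. Then the set of true points of f is exactly the singleton {A}. -/
lemma segParam (A B X : ℤ × ℤ) (s : ℝ) (h0 : 0 ≤ s) (h1 : s ≤ 1)
    (e1 : (X.1 : ℝ) - A.1 = s * ((B.1 : ℝ) - A.1))
    (e2 : (X.2 : ℝ) - A.2 = s * ((B.2 : ℝ) - A.2)) :
    toR X ∈ segment ℝ (toR A) (toR B) := by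
  refine ⟨1 - s, s, by linarith, h0, by ring, ?_⟩
  unfold toR
  simp only [Prod.smul_mk, Prod.mk_add_mk, smul_eq_mul, Prod.mk.injEq]
  constructor
  · linear_combination -e1
  · linear_combination -e2

lemma between_of (A B C : ℤ × ℤ) (q vv : ℤ) (hvv : 0 < vv)
    (hq0 : 0 ≤ q) (hq1 : q ≤ vv)
    (h1 : vv * (C.1 - A.1) = q * (B.1 - A.1))
    (h2 : vv * (C.2 - A.2) = q * (B.2 - A.2)) :
    toR C ∈ segment ℝ (toR A) (toR B) := by
  have hvvR : (0:ℝ) < (vv : ℝ) := by exact_mod_cast hvv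
  apply segParam A B C ((q : ℝ) / (vv : ℝ))
  · exact div_nonneg (by exact_mod_cast hq0) hvvR.le
  · rw [div_le_one hvvR]; exact_mod_cast hq1
  · rw [div_mul_eq_mul_div, eq_div_iff (ne_of_gt hvvR)]
    have hr := congrArg (fun z : ℤ => (z : ℝ)) h1
    push_cast at hr
    linear_combination hr
  · rw [div_mul_eq_mul_div, eq_div_iff (ne_of_gt hvvR)]
    have hr := congrArg (fun z : ℤ => (z : ℝ)) h2
    push_cast at hr
    linear_combination hr

lemma fseg_fst (A B : ℤ × ℤ) (h : A ≠ B) : fseg A B A = true := by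
  have hdet : Det A B A = 0 := by unfold Det; ring
  unfold fseg
  rw [if_pos hdet, decide_eq_true_iff]
  have hne : A.1 - B.1 ≠ 0 ∨ A.2 - B.2 ≠ 0 := by
    by_contra hc
    push_neg at hc
    exact h (Prod.ext (by omega) (by omega))
  rcases hne with h' | h'
  · have h1 : 0 < (A.1 - B.1) ^ 2 :=
      lt_of_le_of_ne (sq_nonneg _) (Ne.symm (pow_ne_zero 2 h'))
    nlinarith [sq_nonneg (A.2 - B.2)]
  · have h1 : 0 < (A.2 - B.2) ^ 2 :=
      lt_of_le_of_ne (sq_nonneg _) (Ne.symm (pow_ne_zero 2 h'))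
    nlinarith [sq_nonneg (A.1 - B.1)]

lemma sq_sum_pos (P Q : ℤ × ℤ) (h : P ≠ Q) :
    0 < (P.1 - Q.1) ^ 2 + (P.2 - Q.2) ^ 2 := by
  have hne : P.1 - Q.1 ≠ 0 ∨ P.2 - Q.2 ≠ 0 := by
    by_contra hc
    push_neg at hc
    exact h (Prod.ext (by omega) (by omega))
  rcases hne with h' | h'
  · have h1 : 0 < (P.1 - Q.1) ^ 2 :=
      lt_of_le_of_ne (sq_nonneg _) (Ne.symm (pow_ne_zero 2 h'))
    nlinarith [sq_nonneg (P.2 - Q.2)]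
  · have h1 : 0 < (P.2 - Q.2) ^ 2 :=
      lt_of_le_of_ne (sq_nonneg _) (Ne.symm (pow_ne_zero 2 h'))
    nlinarith [sq_nonneg (P.1 - Q.1)]

/-- The core on-line analysis: if X is collinear with A,B and strictly closer
to A than to both B and 2A−B, then X = A. -/
lemma online_case (A B X : ℤ × ℤ)
    (hABne : A ≠ B)
    (hABseg : ∀ C : ℤ × ℤ, toR C ∈ segment ℝ (toR A) (toR B) → C = A ∨ C = B)
    (hADseg : ∀ C : ℤ × ℤ,
      toR C ∈ segment ℝ (toR A) (toR (2*A.1 - B.1, 2*A.2 - B.2)) →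
        C = A ∨ C = (2*A.1 - B.1, 2*A.2 - B.2))
    (hz : (B.1 - A.1) * (X.2 - A.2) - (B.2 - A.2) * (X.1 - A.1) = 0)
    (hx1 : (X.1 - A.1)^2 + (X.2 - A.2)^2 < (X.1 - B.1)^2 + (X.2 - B.2)^2)
    (hx2 : (X.1 - A.1)^2 + (X.2 - A.2)^2
      < (X.1 - (2*A.1 - B.1))^2 + (X.2 - (2*A.2 - B.2))^2) :
    X = A := by
  have hvv : 0 < (B.1 - A.1)^2 + (B.2 - A.2)^2 := sq_sum_pos B A (Ne.symm hABne)
  have hq1 : 2*((X.1 - A.1)*(B.1 - A.1) + (X.2 - A.2)*(B.2 - A.2))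
      < (B.1 - A.1)^2 + (B.2 - A.2)^2 := by nlinarith [hx1]
  have hq2 : -((B.1 - A.1)^2 + (B.2 - A.2)^2)
      < 2*((X.1 - A.1)*(B.1 - A.1) + (X.2 - A.2)*(B.2 - A.2)) := by nlinarith [hx2]
  have hpar1 : ((B.1 - A.1)^2 + (B.2 - A.2)^2) * (X.1 - A.1)
      = ((X.1 - A.1)*(B.1 - A.1) + (X.2 - A.2)*(B.2 - A.2)) * (B.1 - A.1) := by
    linear_combination (-(B.2 - A.2)) * hz
  have hpar2 : ((B.1 - A.1)^2 + (B.2 - A.2)^2) * (X.2 - A.2)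
      = ((X.1 - A.1)*(B.1 - A.1) + (X.2 - A.2)*(B.2 - A.2)) * (B.2 - A.2) := by
    linear_combination (B.1 - A.1) * hz
  rcases lt_trichotomy ((X.1 - A.1)*(B.1 - A.1) + (X.2 - A.2)*(B.2 - A.2)) 0 with hq | hq | hq
  · -- X is on segment A D where D = 2A - B
    have key := hADseg X (between_of A (2*A.1 - B.1, 2*A.2 - B.2) X
      (-((X.1 - A.1)*(B.1 - A.1) + (X.2 - A.2)*(B.2 - A.2)))
      ((B.1 - A.1)^2 + (B.2 - A.2)^2) hvv (by linarith) (by linarith)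
      (by show ((B.1 - A.1)^2 + (B.2 - A.2)^2) * (X.1 - A.1) = _ * ((2*A.1 - B.1) - A.1)
          linear_combination hpar1)
      (by show ((B.1 - A.1)^2 + (B.2 - A.2)^2) * (X.2 - A.2) = _ * ((2*A.2 - B.2) - A.2)
          linear_combination hpar2))
    rcases key with hk | hk
    · exact hk
    · exfalso
      have k1 : X.1 = 2*A.1 - B.1 := by rw [hk]
      have k2 : X.2 = 2*A.2 - B.2 := by rw [hk]
      have : (X.1 - A.1)*(B.1 - A.1) + (X.2 - A.2)*(B.2 - A.2)
          = -((B.1 - A.1)^2 + (B.2 - A.2)^2) := by rw [k1, k2]; ring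
      linarith
  · -- q = 0 : X = A
    have e1 : ((B.1 - A.1)^2 + (B.2 - A.2)^2) * (X.1 - A.1) = 0 := by
      rw [hpar1, hq]; ring
    have e2 : ((B.1 - A.1)^2 + (B.2 - A.2)^2) * (X.2 - A.2) = 0 := by
      rw [hpar2, hq]; ring
    have hx1' : X.1 = A.1 := by
      rcases mul_eq_zero.mp e1 with h | h
      · omega
      · omega
    have hx2' : X.2 = A.2 := by
      rcases mul_eq_zero.mp e2 with h | h
      · omega
      · omega
    exact Prod.ext hx1' hx2'
  · -- X is on segment A B
    have key := hABseg X (between_of A B X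
      ((X.1 - A.1)*(B.1 - A.1) + (X.2 - A.2)*(B.2 - A.2))
      ((B.1 - A.1)^2 + (B.2 - A.2)^2) hvv (by linarith) (by linarith)
      (by linear_combination hpar1) (by linear_combination hpar2))
    rcases key with hk | hk
    · exact hk
    · exfalso
      have k1 : X.1 = B.1 := by rw [hk]
      have k2 : X.2 = B.2 := by rw [hk]
      have : (X.1 - A.1)*(B.1 - A.1) + (X.2 - A.2)*(B.2 - A.2)
          = (B.1 - A.1)^2 + (B.2 - A.2)^2 := by rw [k1, k2]; ring
      linarith

set_option maxHeartbeats 800000 in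
/-- for a proper pair of segments {AB, AD} sharing their first
endpoint A, the set of true points of f = f_AB ∧ f_AD is exactly {A}. -/
theorem stmt14 (m n : ℕ) (A B D : ℤ × ℤ)
    (hA : A ∈ Grid m n) (hB : B ∈ Grid m n) (hD : D ∈ Grid m n)
    (hprop : ProperPair A B A D) :
    ∀ X ∈ Grid m n, ((fseg A B X && fseg A D X) = true ↔ X = A) := by
  obtain ⟨⟨hABne, hABseg⟩, ⟨hADne, hADseg⟩, -, h2, -, h4⟩ := hprop
  have hrel : Det A D B = -Det A B D := by unfold Det; ring
  have hdet : Det A B D = 0 := by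
    by_contra hne
    have h4' : 0 < Det A B D := by
      unfold fseg at h4; rw [if_neg hne, decide_eq_true_iff] at h4; exact h4
    have hne2 : Det A D B ≠ 0 := by rw [hrel]; exact neg_ne_zero.mpr hne
    have h2' : 0 < Det A D B := by
      unfold fseg at h2; rw [if_neg hne2, decide_eq_true_iff] at h2; exact h2
    rw [hrel] at h2'; linarith
  have hdet2 : Det A D B = 0 := by rw [hrel, hdet, neg_zero]
  unfold fseg at h2 h4
  rw [if_pos hdet2, decide_eq_true_iff] at h2
  rw [if_pos hdet, decide_eq_true_iff] at h4
  unfold Det at hdet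
  -- hdet : (B.1 - A.1) * (D.2 - A.2) - (B.2 - A.2) * (D.1 - A.1) = 0
  have hvv : 0 < (B.1 - A.1)^2 + (B.2 - A.2)^2 := sq_sum_pos B A (Ne.symm hABne)
  have huu : 0 < (D.1 - A.1)^2 + (D.2 - A.2)^2 := sq_sum_pos D A (Ne.symm hADne)
  have hpv : 2*((D.1 - A.1)*(B.1 - A.1) + (D.2 - A.2)*(B.2 - A.2))
      < (B.1 - A.1)^2 + (B.2 - A.2)^2 := by nlinarith [h4]
  have hpu : 2*((D.1 - A.1)*(B.1 - A.1) + (D.2 - A.2)*(B.2 - A.2))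
      < (D.1 - A.1)^2 + (D.2 - A.2)^2 := by nlinarith [h2]
  have hsq : ((D.1 - A.1)^2 + (D.2 - A.2)^2) * ((B.1 - A.1)^2 + (B.2 - A.2)^2)
      = ((D.1 - A.1)*(B.1 - A.1) + (D.2 - A.2)*(B.2 - A.2))^2 := by
    linear_combination ((B.1 - A.1)*(D.2 - A.2) - (B.2 - A.2)*(D.1 - A.1)) * hdet
  have hpneg : (D.1 - A.1)*(B.1 - A.1) + (D.2 - A.2)*(B.2 - A.2) < 0 := by
    by_contra hc
    push_neg at hc
    have h1 : 0 < ((D.1 - A.1)^2 + (D.2 - A.2)^2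
        - 2*((D.1 - A.1)*(B.1 - A.1) + (D.2 - A.2)*(B.2 - A.2)))
        * ((B.1 - A.1)^2 + (B.2 - A.2)^2
        - 2*((D.1 - A.1)*(B.1 - A.1) + (D.2 - A.2)*(B.2 - A.2))) :=
      mul_pos (by linarith) (by linarith)
    have m1 := mul_nonneg hc (by linarith :
        (0:ℤ) ≤ (D.1 - A.1)^2 + (D.2 - A.2)^2
          - 2*((D.1 - A.1)*(B.1 - A.1) + (D.2 - A.2)*(B.2 - A.2)))
    have m2 := mul_nonneg hc (by linarith :
        (0:ℤ) ≤ (B.1 - A.1)^2 + (B.2 - A.2)^2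
          - 2*((D.1 - A.1)*(B.1 - A.1) + (D.2 - A.2)*(B.2 - A.2)))
    have msq := sq_nonneg ((D.1 - A.1)*(B.1 - A.1) + (D.2 - A.2)*(B.2 - A.2))
    linarith [h1, hsq, m1, m2, msq]
  have hpar1 : ((B.1 - A.1)^2 + (B.2 - A.2)^2) * (D.1 - A.1)
      = ((D.1 - A.1)*(B.1 - A.1) + (D.2 - A.2)*(B.2 - A.2)) * (B.1 - A.1) := by
    linear_combination (-(B.2 - A.2)) * hdet
  have hpar2 : ((B.1 - A.1)^2 + (B.2 - A.2)^2) * (D.2 - A.2)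
      = ((D.1 - A.1)*(B.1 - A.1) + (D.2 - A.2)*(B.2 - A.2)) * (B.2 - A.2) := by
    linear_combination (B.1 - A.1) * hdet
  have hpar3 : ((D.1 - A.1)^2 + (D.2 - A.2)^2) * (B.1 - A.1)
      = ((D.1 - A.1)*(B.1 - A.1) + (D.2 - A.2)*(B.2 - A.2)) * (D.1 - A.1) := by
    linear_combination (D.2 - A.2) * hdet
  have hpar4 : ((D.1 - A.1)^2 + (D.2 - A.2)^2) * (B.2 - A.2)
      = ((D.1 - A.1)*(B.1 - A.1) + (D.2 - A.2)*(B.2 - A.2)) * (D.2 - A.2) := by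
    linear_combination (-(D.1 - A.1)) * hdet
  have hDeq : D = (2*A.1 - B.1, 2*A.2 - B.2) := by
    rcases le_total ((D.1 - A.1)^2 + (D.2 - A.2)^2)
        ((B.1 - A.1)^2 + (B.2 - A.2)^2) with hle | hle
    · -- p^2 = uu*vv ≤ vv^2 so -p ≤ vv; 2A - D is on segment A B
      have hb : -((D.1 - A.1)*(B.1 - A.1) + (D.2 - A.2)*(B.2 - A.2))
          ≤ (B.1 - A.1)^2 + (B.2 - A.2)^2 := by
        by_contra hcc
        push_neg at hcc
        have f1 := mul_lt_mul_of_pos_right hcc hvv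
        have f2 := mul_le_mul_of_nonneg_right hle hvv.le
        have f3 := mul_lt_mul_of_pos_left hcc
          (by linarith : (0:ℤ) < -((D.1 - A.1)*(B.1 - A.1) + (D.2 - A.2)*(B.2 - A.2)))
        linarith [hsq, f1, f2, f3]
      have key := hABseg (2*A.1 - D.1, 2*A.2 - D.2) (between_of A B
        (2*A.1 - D.1, 2*A.2 - D.2)
        (-((D.1 - A.1)*(B.1 - A.1) + (D.2 - A.2)*(B.2 - A.2)))
        ((B.1 - A.1)^2 + (B.2 - A.2)^2) hvv (by linarith) hb
        (by show ((B.1 - A.1)^2 + (B.2 - A.2)^2) * ((2*A.1 - D.1) - A.1) = _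
            linear_combination -hpar1)
        (by show ((B.1 - A.1)^2 + (B.2 - A.2)^2) * ((2*A.2 - D.2) - A.2) = _
            linear_combination -hpar2))
      rcases key with hk | hk
      · exfalso
        apply hADne
        have k1 : 2*A.1 - D.1 = A.1 := congrArg Prod.fst hk
        have k2 : 2*A.2 - D.2 = A.2 := congrArg Prod.snd hk
        exact Prod.ext (by omega) (by omega)
      · have k1 : 2*A.1 - D.1 = B.1 := congrArg Prod.fst hk
        have k2 : 2*A.2 - D.2 = B.2 := congrArg Prod.snd hk
        exact Prod.ext (by omega) (by omega)
    · -- 2A - B is on segment A D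
      have hb : -((D.1 - A.1)*(B.1 - A.1) + (D.2 - A.2)*(B.2 - A.2))
          ≤ (D.1 - A.1)^2 + (D.2 - A.2)^2 := by
        by_contra hcc
        push_neg at hcc
        have f1 := mul_lt_mul_of_pos_right hcc huu
        have f2 := mul_le_mul_of_nonneg_right hle huu.le
        have f3 := mul_lt_mul_of_pos_left hcc
          (by linarith : (0:ℤ) < -((D.1 - A.1)*(B.1 - A.1) + (D.2 - A.2)*(B.2 - A.2)))
        linarith [hsq, f1, f2, f3]
      have key := hADseg (2*A.1 - B.1, 2*A.2 - B.2) (between_of A D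
        (2*A.1 - B.1, 2*A.2 - B.2)
        (-((D.1 - A.1)*(B.1 - A.1) + (D.2 - A.2)*(B.2 - A.2)))
        ((D.1 - A.1)^2 + (D.2 - A.2)^2) huu (by linarith) hb
        (by show ((D.1 - A.1)^2 + (D.2 - A.2)^2) * ((2*A.1 - B.1) - A.1) = _
            linear_combination -hpar3)
        (by show ((D.1 - A.1)^2 + (D.2 - A.2)^2) * ((2*A.2 - B.2) - A.2) = _
            linear_combination -hpar4))
      rcases key with hk | hk
      · exfalso
        apply hABne
        have k1 : 2*A.1 - B.1 = A.1 := congrArg Prod.fst hk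
        have k2 : 2*A.2 - B.2 = A.2 := congrArg Prod.snd hk
        exact Prod.ext (by omega) (by omega)
      · have k1 : 2*A.1 - B.1 = D.1 := congrArg Prod.fst hk
        have k2 : 2*A.2 - B.2 = D.2 := congrArg Prod.snd hk
        exact Prod.ext (by omega) (by omega)
  subst hDeq
  intro X _
  constructor
  · intro h
    rw [Bool.and_eq_true] at h
    obtain ⟨hx1, hx2⟩ := h
    have hdd : Det A (2*A.1 - B.1, 2*A.2 - B.2) X = -Det A B X := by
      unfold Det; ring
    by_cases hz : Det A B X = 0
    · have hz2 : Det A (2*A.1 - B.1, 2*A.2 - B.2) X = 0 := by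
        rw [hdd, hz, neg_zero]
      unfold fseg at hx1 hx2
      rw [if_pos hz, decide_eq_true_iff] at hx1
      rw [if_pos hz2, decide_eq_true_iff] at hx2
      unfold Det at hz
      exact online_case A B X hABne hABseg hADseg hz hx1 hx2
    · exfalso
      have hz2 : Det A (2*A.1 - B.1, 2*A.2 - B.2) X ≠ 0 := by
        rw [hdd]; exact neg_ne_zero.mpr hz
      unfold fseg at hx1 hx2
      rw [if_neg hz, decide_eq_true_iff] at hx1
      rw [if_neg hz2, decide_eq_true_iff] at hx2
      rw [hdd] at hx2
      linarith
  · intro hXA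
    rw [hXA, Bool.and_eq_true]
    exact ⟨fseg_fst A B hABne, fseg_fst A _ hADne⟩
end
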